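/- Let X be a Banach space and P, Q hermitian idempotents in L(X). If R(P) = R(Q) then P = Q. -/

import Mathlib

open NormedSpace Nat in
/-- exp of a scalar multiple of an idempotent. -/
lemma exp_smul_idem {A : Type*} [NormedRing A] [NormedAlgebra ℂ A] [CompleteSpace A]
    (p : A) (hp : IsIdempotentElem p) (c : ℂ) :
    exp (c • p) = 1 + (Complex.exp c - 1) • p := by
  have hsum : Summable (fun n : ℕ => (n !⁻¹ : ℂ) • (c • p) ^ n) :=
    expSeries_summable' (c • p)
  have hsc : Summable (fun n : ℕ => (n !⁻¹ : ℂ) * c ^ n) := by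
    simpa [smul_eq_mul] using expSeries_summable' (𝕂 := ℂ) c
  have key : ∀ n : ℕ, (((n+1)!⁻¹ : ℂ) • (c • p) ^ (n+1)) = ((((n+1)!⁻¹ : ℂ) * c ^ (n+1))) • p := by
    intro n
    rw [smul_pow, hp.pow_succ_eq, smul_smul]
  rw [exp_eq_tsum (𝕂 := ℂ)]
  beta_reduce
  rw [Summable.tsum_eq_zero_add hsum]
  simp only [pow_zero, Nat.factorial_zero, Nat.cast_one, inv_one, one_smul]
  simp only [key]
  rw [Summable.tsum_smul_const]
  · congr 1
    have hexp : Complex.exp c = ∑' n : ℕ, (n !⁻¹ : ℂ) * c ^ n := by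
      rw [Complex.exp_eq_exp_ℂ, exp_eq_tsum (𝕂 := ℂ)]
      simp [smul_eq_mul]
    rw [hexp, Summable.tsum_eq_zero_add hsc]
    simp
  · have := (summable_nat_add_iff 1).2 hsc
    simpa using this

/-- An element `h` of a complex normed algebra is hermitian if
`‖exp(i t h)‖ = 1` for all real `t`. -/
def IsHermitian {A : Type*} [NormedRing A] [NormedAlgebra ℂ A] (h : A) : Prop :=
  ∀ t : ℝ, ‖NormedSpace.exp (((Complex.I * t) : ℂ) • h)‖ = 1

/-- `x` is a Moore-Penrose inverse of `a`: `a = axa`, `x = xax`, and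
`ax`, `xa` are hermitian. -/
def IsMoorePenrose {A : Type*} [NormedRing A] [NormedAlgebra ℂ A] (a x : A) : Prop :=
  a = a * x * a ∧ x = x * a * x ∧ IsHermitian (a * x) ∧ IsHermitian (x * a)

open Real in
/-- Hermitian idempotents with the same range are equal. -/
theorem hermitian_idempotent_ext_range {X : Type*} [NormedAddCommGroup X]
    [NormedSpace ℂ X] [CompleteSpace X] (P Q : X →L[ℂ] X)
    (hP : IsIdempotentElem P) (hP' : IsHermitian P)
    (hQ : IsIdempotentElem Q) (hQ' : IsHermitian Q)
    (h : LinearMap.range (P : X →ₗ[ℂ] X) = LinearMap.range (Q : X →ₗ[ℂ] X)) : P = Q := by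
  -- Step 1: P * Q = Q and Q * P = P
  have hPQ : P * Q = Q := by
    ext x
    have hx : Q x ∈ LinearMap.range (Q : X →ₗ[ℂ] X) := ⟨x, rfl⟩
    rw [← h] at hx
    obtain ⟨y, hy⟩ := hx
    have h2 : P (P y) = P y := ContinuousLinearMap.ext_iff.1 hP y
    calc (P * Q) x = P (Q x) := rfl
      _ = P (P y) := by rw [← hy]; rfl
      _ = P y := h2
      _ = Q x := hy
  have hQP : Q * P = P := by
    ext x
    have hx : P x ∈ LinearMap.range (P : X →ₗ[ℂ] X) := ⟨x, rfl⟩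
    rw [h] at hx
    obtain ⟨y, hy⟩ := hx
    have h2 : Q (Q y) = Q y := ContinuousLinearMap.ext_iff.1 hQ y
    calc (Q * P) x = Q (P x) := rfl
      _ = Q (Q y) := by rw [← hy]; rfl
      _ = Q y := h2
      _ = P x := hy
  -- Step 2: N := P - Q, N * N = 0
  set N : X →L[ℂ] X := P - Q with hN
  have hN2 : N * N = 0 := by
    simp only [hN, mul_sub, sub_mul, hP.eq, hQ.eq, hPQ, hQP]
    abel
  -- Step 3: exp(iπP) = 1 - 2P etc.
  have hexpP : NormedSpace.exp (((Complex.I * (π : ℝ)) : ℂ) • P) = 1 - (2:ℂ) • P := by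
    rw [exp_smul_idem P hP, mul_comm Complex.I ((π : ℝ) : ℂ), Complex.exp_pi_mul_I,
      show (-1 - 1 : ℂ) = -2 by norm_num, neg_smul, ← sub_eq_add_neg]
  have hexpQ : NormedSpace.exp (((Complex.I * ((-π : ℝ) : ℝ)) : ℂ) • Q) = 1 - (2:ℂ) • Q := by
    have hc : Complex.exp (Complex.I * ((-π : ℝ) : ℂ)) = -1 := by
      push_cast
      rw [show Complex.I * -(π : ℂ) = -(↑π * Complex.I) by ring, Complex.exp_neg,
        Complex.exp_pi_mul_I]
      norm_num
    rw [exp_smul_idem Q hQ, hc, show (-1 - 1 : ℂ) = -2 by norm_num, neg_smul, ← sub_eq_add_neg]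
  -- Step 4: ‖1 - 2N‖ ≤ 1
  have hprod : (1 - (2:ℂ) • P) * (1 - (2:ℂ) • Q) = 1 - (2:ℂ) • N := by
    simp only [hN, mul_sub, sub_mul, one_mul, mul_one, smul_sub, smul_mul_assoc,
      mul_smul_comm, smul_smul, hPQ]
    module
  have hnorm : ‖(1 : X →L[ℂ] X) - (2:ℂ) • N‖ ≤ 1 := by
    rw [← hprod]
    calc ‖(1 - (2:ℂ) • P) * (1 - (2:ℂ) • Q)‖
        ≤ ‖(1 : X →L[ℂ] X) - (2:ℂ) • P‖ * ‖(1 : X →L[ℂ] X) - (2:ℂ) • Q‖ := norm_mul_le _ _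
      _ = 1 := by rw [← hexpP, ← hexpQ, hP' π, hQ' (-π)]; norm_num
  -- Step 5: (1 - 2N)^n = 1 - (2n)N
  have hpow : ∀ n : ℕ, ((1 : X →L[ℂ] X) - (2:ℂ) • N) ^ n = 1 - ((2 * n : ℂ)) • N := by
    intro n
    induction n with
    | zero => simp
    | succ n ih =>
      rw [pow_succ, ih]
      simp only [mul_sub, sub_mul, one_mul, mul_one, smul_mul_assoc, mul_smul_comm,
        smul_smul, hN2, smul_zero, sub_zero]
      push_cast
      module
  -- Step 6: conclude N = 0
  have hle : ∀ n : ℕ, 2 * (n : ℝ) * ‖N‖ ≤ 2 := by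
    intro n
    rcases Nat.eq_zero_or_pos n with rfl | hn
    · simpa using norm_nonneg N
    have h1 : ‖(1 : X →L[ℂ] X) - ((2 * n : ℂ)) • N‖ ≤ 1 := by
      rw [← hpow n]
      calc ‖((1 : X →L[ℂ] X) - (2:ℂ) • N) ^ n‖ ≤ ‖(1 : X →L[ℂ] X) - (2:ℂ) • N‖ ^ n :=
            norm_pow_le' _ hn
        _ ≤ 1 ^ n := pow_le_pow_left₀ (norm_nonneg _) hnorm n
        _ = 1 := one_pow n
    have h2 : ‖((2 * n : ℂ)) • N‖ ≤ 2 := by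
      calc ‖((2 * n : ℂ)) • N‖ = ‖(1 : X →L[ℂ] X) - ((1 : X →L[ℂ] X) - ((2 * n : ℂ)) • N)‖ := by
            congr 1; abel
        _ ≤ ‖(1 : X →L[ℂ] X)‖ + ‖(1 : X →L[ℂ] X) - ((2 * n : ℂ)) • N‖ := norm_sub_le _ _
        _ ≤ 1 + 1 := by
            gcongr
            · exact ContinuousLinearMap.norm_id_le
        _ = 2 := by norm_num
    calc 2 * (n : ℝ) * ‖N‖ = ‖((2 * n : ℂ))‖ * ‖N‖ := by
          congr 1
          rw [show ((2 * n : ℂ)) = ((2 * n : ℝ) : ℂ) by push_cast; ring, Complex.norm_real,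
            Real.norm_eq_abs, abs_of_nonneg (by positivity)]
      _ = ‖((2 * n : ℂ)) • N‖ := (norm_smul _ _).symm
      _ ≤ 2 := h2
  have hNzero : N = 0 := by
    by_contra hne
    have hpos : 0 < ‖N‖ := norm_pos_iff.mpr hne
    obtain ⟨n, hn⟩ := exists_nat_gt (1 / ‖N‖)
    have := hle n
    have h3 : 2 * (1 / ‖N‖) * ‖N‖ < 2 * (n : ℝ) * ‖N‖ := by
      apply mul_lt_mul_of_pos_right _ hpos
      linarith
    rw [one_div, mul_assoc, inv_mul_cancel₀ (ne_of_gt hpos), mul_one] at h3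
    linarith
  have hsub : P - Q = 0 := hNzero
  exact sub_eq_zero.mp hsub
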